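/- Let f, g : 𝕋 → ℂ be bounded measurable functions on the circle 𝕋 = ℝ/2πℤ belonging to the Sobolev space H^{1/2}(𝕋). Then their product fg is in H^{1/2}(𝕋) and ‖fg‖_{H^{1/2}} ≤ C(‖f‖_{L^∞}·‖g‖_{H^{1/2}} + ‖g‖_{L^∞}·‖f‖_{H^{1/2}}) for an absolute constant C. -/

import Mathlib

open scoped Real

instance : Fact (0 < 2 * π) := ⟨by positivity⟩

/-- The squared `H^{1/2}` Sobolev norm on the circle, via Fourier coefficients. -/
noncomputable def sobolevHalfNormSq (f : AddCircle (2 * π) → ℂ) : ℝ :=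
  ∑' n : ℤ, (1 + |n| : ℝ) * ‖fourierCoeff f n‖ ^ 2

open MeasureTheory
open scoped ENNReal NNReal

namespace Krein

local notation "μH" => AddCircle.haarAddCircle (T := 2 * π)



lemma memL2 {f : AddCircle (2 * π) → ℂ} {M : ℝ} (hm : Measurable f) (hb : ∀ x, ‖f x‖ ≤ M) :
    MemLp f 2 μH :=
  MemLp.of_bound hm.aestronglyMeasurable M (Filter.Eventually.of_forall hb)

lemma fourierCoeff_congr_ae {f g : AddCircle (2 * π) → ℂ} (h : f =ᵐ[μH] g) (n : ℤ) :
    fourierCoeff f n = fourierCoeff g n :=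
  integral_congr_ae (h.mono fun x hx => by simp [hx])

lemma parseval {f : AddCircle (2 * π) → ℂ} {M : ℝ} (hm : Measurable f) (hb : ∀ x, ‖f x‖ ≤ M) :
    Summable (fun n : ℤ => ‖fourierCoeff f n‖ ^ 2) ∧
      ∑' n : ℤ, ‖fourierCoeff f n‖ ^ 2 = ∫ x, ‖f x‖ ^ 2 ∂μH := by
  have hf : MemLp f 2 μH := memL2 hm hb
  set F : Lp ℂ 2 μH := hf.toLp f with hF
  have hae : (F : AddCircle (2 * π) → ℂ) =ᵐ[μH] f := hf.coeFn_toLp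
  have hcoeff : ∀ n, fourierCoeff (F : AddCircle (2 * π) → ℂ) n = fourierCoeff f n :=
    fun n => fourierCoeff_congr_ae hae n
  have hsum : Summable (fun n : ℤ => ‖fourierCoeff (F : AddCircle (2 * π) → ℂ) n‖ ^ 2) := by
    have hmem := (fourierBasis.repr F).property
    have := hmem.summable (by norm_num)
    simp only [fourierBasis_repr] at this
    have h2 : ((2 : ℝ≥0∞).toReal) = (2 : ℝ) := by norm_num
    rw [h2] at this
    simpa only [Real.rpow_two] using this
  constructor
  · simpa only [hcoeff] using hsum
  · have := tsum_sq_fourierCoeff F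
    simp only [hcoeff] at this
    rw [this]
    exact integral_congr_ae (hae.mono fun x hx => by simp only [hx])




lemma fourier_norm_one (n : ℤ) (x : AddCircle (2 * π)) : ‖fourier n x‖ = 1 := by
  rw [fourier_apply]
  exact Circle.norm_coe _

lemma fourier_hom (n : ℤ) (x y : AddCircle (2 * π)) :
    fourier n (x + y) = fourier n x * fourier n y := by
  simp_rw [fourier_apply, smul_add, AddCircle.toCircle_add, Circle.coe_mul]

lemma integrable_fourier_smul {f : AddCircle (2 * π) → ℂ} {M : ℝ} (hm : Measurable f)
    (hb : ∀ x, ‖f x‖ ≤ M) (n : ℤ) :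
    Integrable (fun x => fourier (-n) x • f x) μH := by
  rw [← memLp_one_iff_integrable]
  refine MemLp.of_bound ?_ M (Filter.Eventually.of_forall fun x => ?_)
  · exact (((fourier (-n)).continuous.measurable).smul hm).aestronglyMeasurable
  · rw [norm_smul, fourier_norm_one, one_mul]; exact hb x

lemma fourierCoeff_translate {f : AddCircle (2 * π) → ℂ} {M : ℝ} (hm : Measurable f)
    (hb : ∀ x, ‖f x‖ ≤ M) (t : AddCircle (2 * π)) (n : ℤ) :
    fourierCoeff (fun x => f (x + t)) n = fourier (-n) (-t) * fourierCoeff f n := by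
  have h1 : ∫ x, fourier (-n) (x - t) • f x ∂μH
      = fourier (-n) (-t) * fourierCoeff f n := by
    simp_rw [sub_eq_add_neg, fourier_hom, smul_eq_mul, mul_comm (fourier (-n) _)
      (fourier (-n) (-t)), mul_assoc]
    rw [integral_const_mul]
    rfl
  have h2 : ∫ x, (fun y => fourier (-n) (y - t) • f y) (x + t) ∂μH
      = ∫ x, fourier (-n) (x - t) • f x ∂μH :=
    integral_add_right_eq_self (μ := μH) (fun y => fourier (-n) (y - t) • f y) t
  rw [fourierCoeff]
  simp only [add_sub_cancel_right] at h2
  rw [← h1, ← h2]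

lemma fourierCoeff_diff {f : AddCircle (2 * π) → ℂ} {M : ℝ} (hm : Measurable f)
    (hb : ∀ x, ‖f x‖ ≤ M) (t : AddCircle (2 * π)) (n : ℤ) :
    fourierCoeff (fun x => f (x + t) - f x) n
      = (fourier (-n) (-t) - 1) * fourierCoeff f n := by
  have hmt : Measurable fun x : AddCircle (2 * π) => f (x + t) :=
    hm.comp (measurable_add_const t)
  have hbt : ∀ x, ‖f (x + t)‖ ≤ M := fun x => hb (x + t)
  have hI1 := integrable_fourier_smul hmt hbt n
  have hI2 := integrable_fourier_smul hm hb n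
  have : fourierCoeff (fun x => f (x + t) - f x) n
      = fourierCoeff (fun x => f (x + t)) n - fourierCoeff f n := by
    simp only [fourierCoeff, smul_sub]
    exact integral_sub hI1 hI2
  rw [this, fourierCoeff_translate hm hb t n, sub_mul, one_mul]



/-- difference-quotient weight -/
noncomputable def eps (n : ℤ) (m : ℕ) : ℝ := 2 - 2 * Real.cos ((n : ℝ) * (π / 2 ^ m))

lemma eps_nonneg (n : ℤ) (m : ℕ) : 0 ≤ eps n m := by
  have := Real.cos_le_one ((n : ℝ) * (π / 2 ^ m))
  unfold eps; linarith

lemma eps_le_four (n : ℤ) (m : ℕ) : eps n m ≤ 4 := by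
  have := Real.neg_one_le_cos ((n : ℝ) * (π / 2 ^ m))
  unfold eps; linarith

lemma two_sub_two_cos_le_sq (θ : ℝ) : 2 - 2 * Real.cos θ ≤ θ ^ 2 := by
  have h1 : Real.sin (θ / 2) ^ 2 = 1 / 2 - Real.cos (2 * (θ / 2)) / 2 :=
    Real.sin_sq_eq_half_sub (θ / 2)
  have h2 : Real.sin (θ / 2) ^ 2 ≤ (θ / 2) ^ 2 := Real.sin_sq_le_sq
  have : 2 * (θ / 2) = θ := by ring
  rw [this] at h1
  nlinarith

lemma eps_le_sq (n : ℤ) (m : ℕ) : eps n m ≤ ((n : ℝ) * (π / 2 ^ m)) ^ 2 :=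
  two_sub_two_cos_le_sq _

lemma eps_abs (n : ℤ) (m : ℕ) : eps n m = 2 - 2 * Real.cos ((|n| : ℤ) * (π / 2 ^ m)) := by
  unfold eps
  rcases abs_choice n with h | h
  · rw [h]
  · rw [h]; push_cast
    rw [neg_mul, Real.cos_neg]

lemma summable_eps (n : ℤ) : Summable (fun m : ℕ => (2 : ℝ) ^ m * eps n m) := by
  refine Summable.of_nonneg_of_le (fun m => ?_) (fun m => ?_)
    (((summable_geometric_two).mul_left (((n : ℝ) * π) ^ 2)))
  · exact mul_nonneg (by positivity) (eps_nonneg n m)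
  · have h := eps_le_sq n m
    have h2 : (2 : ℝ) ^ m * (((n : ℝ) * (π / 2 ^ m)) ^ 2) = ((n : ℝ) * π) ^ 2 * ((1:ℝ)/2)^m := by
      rw [mul_pow, div_pow, mul_pow, div_pow, one_pow]
      have h4 : ((2:ℝ) ^ m) ^ 2 = 2 ^ m * 2 ^ m := sq _
      field_simp
    calc (2:ℝ) ^ m * eps n m ≤ (2:ℝ) ^ m * (((n : ℝ) * (π / 2 ^ m)) ^ 2) := by
          exact mul_le_mul_of_nonneg_left h (by positivity)
      _ = ((n : ℝ) * π) ^ 2 * ((1:ℝ)/2) ^ m := h2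

/-- the Fourier multiplier -/
noncomputable def Phi (n : ℤ) : ℝ := ∑' m : ℕ, (2 : ℝ) ^ m * eps n m

lemma Phi_nonneg (n : ℤ) : 0 ≤ Phi n :=
  tsum_nonneg fun m => mul_nonneg (by positivity) (eps_nonneg n m)

lemma Phi_zero : Phi 0 = 0 := by
  unfold Phi eps
  simp

lemma Phi_le (n : ℤ) : Phi n ≤ 28 * |(n : ℝ)| := by
  rcases eq_or_ne n 0 with rfl | hn
  · simp [Phi_zero]
  · set k : ℕ := n.natAbs with hk
    have hk1 : 1 ≤ k := Int.natAbs_pos.mpr hn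
    have hex : ∃ m : ℕ, k ≤ 2 ^ m := ⟨k, Nat.le_of_lt (Nat.lt_two_pow_self (n := k))⟩
    set m₀ := Nat.find hex with hm₀
    have hle : k ≤ 2 ^ m₀ := Nat.find_spec hex
    have h2k : 2 ^ m₀ ≤ 2 * k := by
      rcases Nat.eq_zero_or_pos m₀ with h | h
      · rw [h]; omega
      · have := Nat.find_min hex (m := m₀ - 1) (by omega)
        push_neg at this
        have h2 : 2 ^ m₀ = 2 * 2 ^ (m₀ - 1) := by
          rw [← pow_succ']
          congr 1; omega
        omega
    have habs : |(n : ℝ)| = (k : ℝ) := by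
      rw [hk, Nat.cast_natAbs]; push_cast; simp
    rw [habs]
    have hsplit := Summable.sum_add_tsum_nat_add m₀ (summable_eps n)
    rw [Phi, ← hsplit]
    have hhead : ∑ m ∈ Finset.range m₀, (2:ℝ) ^ m * eps n m ≤ 8 * k := by
      calc ∑ m ∈ Finset.range m₀, (2:ℝ) ^ m * eps n m
          ≤ ∑ m ∈ Finset.range m₀, (2:ℝ) ^ m * 4 := by
            refine Finset.sum_le_sum fun m _ => ?_
            exact mul_le_mul_of_nonneg_left (eps_le_four n m) (by positivity)
        _ = 4 * ∑ m ∈ Finset.range m₀, (2:ℝ) ^ m := by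
            rw [Finset.mul_sum]; exact Finset.sum_congr rfl fun m _ => by ring
        _ = 4 * ((2:ℝ) ^ m₀ - 1) := by rw [geom_sum_eq (by norm_num)]; norm_num
        _ ≤ 4 * (2 * (k:ℝ) - 1) := by
            have : ((2:ℕ) ^ m₀ : ℝ) ≤ ((2 * k : ℕ) : ℝ) := by exact_mod_cast h2k
            push_cast at this ⊢
            linarith
        _ ≤ 8 * k := by linarith
    have htail : ∑' m : ℕ, (2:ℝ) ^ (m + m₀) * eps n (m + m₀) ≤ 20 * k := by
      have hmaj : ∀ m : ℕ, (2:ℝ) ^ (m + m₀) * eps n (m + m₀)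
          ≤ ((k:ℝ) ^ 2 * π ^ 2 / 2 ^ m₀) * ((1:ℝ)/2) ^ m := by
        intro m
        have h := eps_le_sq n (m + m₀)
        have hnk : ((n:ℝ))^2 = (k:ℝ)^2 := by
          rw [hk, Nat.cast_natAbs]; push_cast; simp [sq_abs]
        calc (2:ℝ) ^ (m + m₀) * eps n (m + m₀)
            ≤ (2:ℝ) ^ (m + m₀) * (((n : ℝ) * (π / 2 ^ (m + m₀))) ^ 2) :=
              mul_le_mul_of_nonneg_left h (by positivity)
          _ = ((k:ℝ) ^ 2 * π ^ 2 / 2 ^ m₀) * ((1:ℝ)/2) ^ m := by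
              rw [mul_pow, div_pow, pow_add, div_pow, one_pow, mul_pow]
              rw [hnk]
              field_simp
      calc ∑' m : ℕ, (2:ℝ) ^ (m + m₀) * eps n (m + m₀)
          ≤ ∑' m : ℕ, ((k:ℝ) ^ 2 * π ^ 2 / 2 ^ m₀) * ((1:ℝ)/2) ^ m := by
            refine Summable.tsum_le_tsum hmaj ((summable_eps n).comp_injective
              (add_left_injective m₀)) ((summable_geometric_two).mul_left _)
        _ = ((k:ℝ) ^ 2 * π ^ 2 / 2 ^ m₀) * 2 := by
            rw [tsum_mul_left, tsum_geometric_two]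
        _ ≤ ((k:ℝ) * π ^ 2) * 2 := by
            have hπ : (0:ℝ) < π ^ 2 := by positivity
            have hbound : (k:ℝ) ^ 2 / 2 ^ m₀ ≤ (k:ℝ) := by
              rw [div_le_iff₀ (by positivity), sq]
              have : (k:ℝ) ≤ (2:ℝ) ^ m₀ := by exact_mod_cast hle
              exact mul_le_mul_of_nonneg_left this (by positivity)
            calc (k:ℝ) ^ 2 * π ^ 2 / 2 ^ m₀ * 2 = ((k:ℝ)^2 / 2^m₀) * π^2 * 2 := by ring
              _ ≤ (k:ℝ) * π ^ 2 * 2 := by nlinarith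
        _ ≤ 20 * k := by
            have hpi2 : π ^ 2 ≤ 9.9225 := by nlinarith [Real.pi_lt_d2, Real.pi_pos]
            have hk0 : (0:ℝ) ≤ (k:ℝ) := Nat.cast_nonneg k
            nlinarith [mul_le_mul_of_nonneg_left hpi2 hk0]
    linarith

lemma Phi_ge (n : ℤ) (hn : n ≠ 0) : 2 * |(n : ℝ)| ≤ Phi n := by
  set k : ℕ := n.natAbs with hk
  have hk1 : 1 ≤ k := Int.natAbs_pos.mpr hn
  have hex : ∃ m : ℕ, k ≤ 2 ^ m := ⟨k, Nat.le_of_lt (Nat.lt_two_pow_self (n := k))⟩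
  set m₀ := Nat.find hex with hm₀
  have hle : k ≤ 2 ^ m₀ := Nat.find_spec hex
  have h2k : 2 ^ m₀ ≤ 2 * k := by
    rcases Nat.eq_zero_or_pos m₀ with h | h
    · rw [h]; omega
    · have := Nat.find_min hex (m := m₀ - 1) (by omega)
      push_neg at this
      have h2 : 2 ^ m₀ = 2 * 2 ^ (m₀ - 1) := by
        rw [← pow_succ']
        congr 1; omega
      omega
  have habs : |(n : ℝ)| = (k : ℝ) := by
    rw [hk, Nat.cast_natAbs]; push_cast; simp
  rw [habs]
  -- the term at m₀ is at least 2 * k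
  have hterm : 2 * (k:ℝ) ≤ (2:ℝ) ^ m₀ * eps n m₀ := by
    have hθ : (k:ℝ) * (π / 2 ^ m₀) ≤ π := by
      rw [div_eq_mul_inv]
      have : (k:ℝ) ≤ (2:ℝ) ^ m₀ := by exact_mod_cast hle
      calc (k:ℝ) * (π * ((2:ℝ)^m₀)⁻¹) ≤ (2:ℝ)^m₀ * (π * ((2:ℝ)^m₀)⁻¹) := by
            refine mul_le_mul_of_nonneg_right this (by positivity)
        _ = π := by field_simp
    have hθ2 : π / 2 ≤ (k:ℝ) * (π / 2 ^ m₀) := by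
      have h2r : ((2:ℝ)) ^ m₀ ≤ 2 * (k:ℝ) := by exact_mod_cast h2k
      rw [div_le_iff₀ (by norm_num : (0:ℝ) < 2)]
      rw [div_eq_mul_inv]
      have hpos : (0:ℝ) < (2:ℝ)^m₀ := by positivity
      calc π = ((2:ℝ)^m₀ * ((2:ℝ)^m₀)⁻¹) * π := by field_simp
        _ ≤ (2 * (k:ℝ) * ((2:ℝ)^m₀)⁻¹) * π := by
            refine mul_le_mul_of_nonneg_right (mul_le_mul_of_nonneg_right h2r (by positivity)) Real.pi_pos.le
        _ = (k:ℝ) * (π * ((2:ℝ)^m₀)⁻¹) * 2 := by ring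
    have hcos : Real.cos ((k:ℝ) * (π / 2 ^ m₀)) ≤ 0 := by
      refine Real.cos_nonpos_of_pi_div_two_le_of_le hθ2 ?_
      linarith [Real.pi_div_two_pos]
    have heps : 2 ≤ eps n m₀ := by
      rw [eps_abs]
      have : ((|n| : ℤ) : ℝ) = (k : ℝ) := by
        push_cast; exact habs
      rw [this]
      linarith
    calc 2 * (k:ℝ) ≤ 2 * (2:ℝ)^m₀ := by
          have : (k:ℝ) ≤ (2:ℝ) ^ m₀ := by exact_mod_cast hle
          linarith
      _ ≤ (2:ℝ) ^ m₀ * eps n m₀ := by nlinarith [pow_pos (by norm_num : (0:ℝ)<2) m₀]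
  refine hterm.trans ?_
  exact Summable.le_tsum (summable_eps n) m₀ fun m _ => mul_nonneg (by positivity) (eps_nonneg n m)



lemma norm_exp_I_sub_one_sq (θ : ℝ) :
    ‖Complex.exp ((θ : ℂ) * Complex.I) - 1‖ ^ 2 = 2 - 2 * Real.cos θ := by
  rw [Complex.exp_mul_I]
  rw [Complex.sq_norm]
  simp only [Complex.normSq_apply, Complex.sub_re, Complex.add_re, Complex.cos_ofReal_re,
    Complex.mul_re, Complex.sin_ofReal_re, Complex.I_re, Complex.sin_ofReal_im, Complex.I_im,
    Complex.one_re, Complex.sub_im, Complex.add_im, Complex.cos_ofReal_im, Complex.mul_im,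
    Complex.one_im]
  nlinarith [Real.sin_sq_add_cos_sq θ]

lemma fourier_neg_neg_coe (n : ℤ) (t : ℝ) :
    fourier (-n) ((-(t : ℝ) : ℝ) : AddCircle (2 * π)) = Complex.exp (((n : ℝ) * t : ℝ) * Complex.I) := by
  rw [fourier_coe_apply]
  congr 1
  have hπ : (π : ℂ) ≠ 0 := Complex.ofReal_ne_zero.mpr Real.pi_ne_zero
  push_cast
  field_simp

lemma key_norm (n : ℤ) (t : ℝ) :
    ‖fourier (-n) (-((t : ℝ) : AddCircle (2 * π))) - 1‖ ^ 2 = 2 - 2 * Real.cos ((n : ℝ) * t) := by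
  have h : -(((t : ℝ) : AddCircle (2 * π))) = ((-t : ℝ) : AddCircle (2 * π)) := by
    simp
  rw [h, fourier_neg_neg_coe n t, norm_exp_I_sub_one_sq]




/-- translate-difference -/
noncomputable def D (h : AddCircle (2 * π) → ℂ) (t : ℝ) : AddCircle (2 * π) → ℂ :=
  fun x => h (x + (t : AddCircle (2 * π))) - h x

noncomputable def pm (m : ℕ) : ℝ := π / 2 ^ m

noncomputable def A (h : AddCircle (2 * π) → ℂ) (n : ℤ) : ℝ≥0∞ :=
  ENNReal.ofReal (‖fourierCoeff h n‖ ^ 2)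

noncomputable def I2 (h : AddCircle (2 * π) → ℂ) : ℝ≥0∞ :=
  ENNReal.ofReal (∫ x, ‖h x‖ ^ 2 ∂μH)

noncomputable def Sof (h : AddCircle (2 * π) → ℂ) : ℝ≥0∞ :=
  ∑' n : ℤ, ENNReal.ofReal ((1 + |(n : ℝ)|) * ‖fourierCoeff h n‖ ^ 2)

noncomputable def Q (h : AddCircle (2 * π) → ℂ) : ℝ≥0∞ :=
  I2 h + ∑' m : ℕ, (2 : ℝ≥0∞) ^ m * I2 (D h (pm m))

lemma D_meas {h : AddCircle (2 * π) → ℂ} (hm : Measurable h) (t : ℝ) :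
    Measurable (D h t) :=
  (hm.comp (measurable_add_const _)).sub hm

lemma D_bound {h : AddCircle (2 * π) → ℂ} {M : ℝ} (hb : ∀ x, ‖h x‖ ≤ M) (t : ℝ) :
    ∀ x, ‖D h t x‖ ≤ 2 * M := by
  intro x
  calc ‖h (x + (t : AddCircle (2 * π))) - h x‖ ≤ ‖h (x + (t : AddCircle (2 * π)))‖ + ‖h x‖ :=
        norm_sub_le _ _
    _ ≤ M + M := add_le_add (hb _) (hb _)
    _ = 2 * M := by ring



lemma ennParseval {h : AddCircle (2 * π) → ℂ} {M : ℝ} (hm : Measurable h)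
    (hb : ∀ x, ‖h x‖ ≤ M) : ∑' n : ℤ, A h n = I2 h := by
  obtain ⟨hs, he⟩ := parseval hm hb
  rw [I2, ← he, ENNReal.ofReal_tsum_of_nonneg (fun n => sq_nonneg _) hs]
  rfl

lemma A_D_eq {h : AddCircle (2 * π) → ℂ} {M : ℝ} (hm : Measurable h)
    (hb : ∀ x, ‖h x‖ ≤ M) (m : ℕ) (n : ℤ) :
    A (D h (pm m)) n = ENNReal.ofReal (eps n m) * A h n := by
  have hc := fourierCoeff_diff hm hb ((pm m : ℝ) : AddCircle (2 * π)) n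
  have : fourierCoeff (D h (pm m)) n
      = (fourier (-n) (-((pm m : ℝ) : AddCircle (2 * π))) - 1) * fourierCoeff h n := hc
  rw [A, this, norm_mul, mul_pow, key_norm n (pm m)]
  have heq : 2 - 2 * Real.cos ((n : ℝ) * pm m) = eps n m := by
    rw [eps, pm]
  rw [heq, ENNReal.ofReal_mul (eps_nonneg n m)]
  rfl

lemma Q_eq {h : AddCircle (2 * π) → ℂ} {M : ℝ} (hm : Measurable h)
    (hb : ∀ x, ‖h x‖ ≤ M) :
    Q h = ∑' n : ℤ, ENNReal.ofReal (1 + Phi n) * A h n := by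
  have hDm : ∀ m : ℕ, ∑' n : ℤ, A (D h (pm m)) n = I2 (D h (pm m)) := fun m =>
    ennParseval (D_meas hm (pm m)) (D_bound hb (pm m))
  have step1 : Q h = ∑' n : ℤ, A h n + ∑' m : ℕ, ∑' n : ℤ, (2 : ℝ≥0∞) ^ m * A (D h (pm m)) n := by
    rw [Q, ennParseval hm hb]
    congr 1
    refine tsum_congr fun m => ?_
    rw [← hDm m, ENNReal.tsum_mul_left]
  have step2 : ∑' m : ℕ, ∑' n : ℤ, (2 : ℝ≥0∞) ^ m * A (D h (pm m)) n
      = ∑' n : ℤ, (∑' m : ℕ, (2 : ℝ≥0∞) ^ m * ENNReal.ofReal (eps n m)) * A h n := by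
    rw [ENNReal.tsum_comm]
    refine tsum_congr fun n => ?_
    calc ∑' m : ℕ, (2 : ℝ≥0∞) ^ m * A (D h (pm m)) n
        = ∑' m : ℕ, ((2 : ℝ≥0∞) ^ m * ENNReal.ofReal (eps n m)) * A h n := by
          refine tsum_congr fun m => ?_
          rw [A_D_eq hm hb m n, ← mul_assoc]
      _ = (∑' m : ℕ, (2 : ℝ≥0∞) ^ m * ENNReal.ofReal (eps n m)) * A h n :=
          ENNReal.tsum_mul_right
  have step3 : ∀ n : ℤ, ∑' m : ℕ, (2 : ℝ≥0∞) ^ m * ENNReal.ofReal (eps n m)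
      = ENNReal.ofReal (Phi n) := by
    intro n
    rw [Phi, ENNReal.ofReal_tsum_of_nonneg
      (fun m => mul_nonneg (by positivity) (eps_nonneg n m)) (summable_eps n)]
    refine tsum_congr fun m => ?_
    rw [ENNReal.ofReal_mul (by positivity)]
    congr 1
    rw [ENNReal.ofReal_pow (by norm_num)]
    norm_num
  rw [step1, step2, ← ENNReal.tsum_add]
  refine tsum_congr fun n => ?_
  rw [step3 n, ENNReal.ofReal_add (by norm_num) (Phi_nonneg n), ENNReal.ofReal_one, add_mul,
    one_mul]

lemma Sof_eq_tsum_mul (h : AddCircle (2 * π) → ℂ) :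
    Sof h = ∑' n : ℤ, ENNReal.ofReal (1 + |(n : ℝ)|) * A h n := by
  refine tsum_congr fun n => ?_
  rw [ENNReal.ofReal_mul (by positivity)]
  rfl

lemma Sof_le_Q {h : AddCircle (2 * π) → ℂ} {M : ℝ} (hm : Measurable h)
    (hb : ∀ x, ‖h x‖ ≤ M) : Sof h ≤ Q h := by
  rw [Q_eq hm hb, Sof_eq_tsum_mul]
  refine ENNReal.tsum_le_tsum fun n => ?_
  refine mul_le_mul_left (ENNReal.ofReal_le_ofReal ?_) _
  rcases eq_or_ne n 0 with rfl | hn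
  · simp [Phi_nonneg]
  · have := Phi_ge n hn
    have habs : (0 : ℝ) ≤ |(n : ℝ)| := abs_nonneg _
    linarith

lemma Q_le_Sof {h : AddCircle (2 * π) → ℂ} {M : ℝ} (hm : Measurable h)
    (hb : ∀ x, ‖h x‖ ≤ M) : Q h ≤ 28 * Sof h := by
  rw [Q_eq hm hb, Sof_eq_tsum_mul, ← ENNReal.tsum_mul_left]
  refine ENNReal.tsum_le_tsum fun n => ?_
  rw [← mul_assoc]
  refine mul_le_mul_left ?_ _
  have h28 : (28 : ℝ≥0∞) = ENNReal.ofReal (28 : ℝ) := by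
    rw [ENNReal.ofReal_ofNat]
  rw [h28, ← ENNReal.ofReal_mul (by norm_num)]
  refine ENNReal.ofReal_le_ofReal ?_
  have := Phi_le n
  have habs : (0 : ℝ) ≤ |(n : ℝ)| := abs_nonneg _
  linarith

lemma int_normsq {h : AddCircle (2 * π) → ℂ} {M : ℝ} (hm : Measurable h)
    (hb : ∀ x, ‖h x‖ ≤ M) : Integrable (fun x => ‖h x‖ ^ 2) μH := by
  rw [← memLp_one_iff_integrable]
  refine MemLp.of_bound ((hm.norm.pow_const 2)).aestronglyMeasurable (M ^ 2)
    (Filter.Eventually.of_forall fun x => ?_)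
  rw [Real.norm_eq_abs, abs_of_nonneg (sq_nonneg _)]
  have h0 : (0:ℝ) ≤ ‖h x‖ := norm_nonneg _
  have := hb x
  nlinarith

lemma I2_nonneg_integrand (h : AddCircle (2 * π) → ℂ) :
    (0:ℝ) ≤ ∫ x, ‖h x‖ ^ 2 ∂μH := integral_nonneg fun x => sq_nonneg _

lemma I2_mul_le {f g : AddCircle (2 * π) → ℂ} {Mf Mg : ℝ}
    (hmf : Measurable f) (hmg : Measurable g)
    (hbf : ∀ x, ‖f x‖ ≤ Mf) (hbg : ∀ x, ‖g x‖ ≤ Mg) (hMf : 0 ≤ Mf) (hMg : 0 ≤ Mg) :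
    I2 (fun x => f x * g x) ≤ ENNReal.ofReal (Mf ^ 2) * I2 g := by
  have hbfg : ∀ x, ‖f x * g x‖ ≤ Mf * Mg := fun x => by
    rw [norm_mul]
    exact mul_le_mul (hbf x) (hbg x) (norm_nonneg _) hMf
  have hint1 : Integrable (fun x => ‖f x * g x‖ ^ 2) μH :=
    int_normsq (hmf.mul hmg) hbfg
  have hint2 : Integrable (fun x => Mf ^ 2 * ‖g x‖ ^ 2) μH :=
    (int_normsq hmg hbg).const_mul _
  have hreal : ∫ x, ‖f x * g x‖ ^ 2 ∂μH ≤ Mf ^ 2 * ∫ x, ‖g x‖ ^ 2 ∂μH := by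
    rw [← integral_const_mul]
    refine integral_mono hint1 hint2 fun x => ?_
    rw [norm_mul, mul_pow]
    have h1 : ‖f x‖ ^ 2 ≤ Mf ^ 2 := by
      have := hbf x; have := norm_nonneg (f x); nlinarith
    exact mul_le_mul_of_nonneg_right h1 (sq_nonneg _)
  calc I2 (fun x => f x * g x) ≤ ENNReal.ofReal (Mf ^ 2 * ∫ x, ‖g x‖ ^ 2 ∂μH) :=
        ENNReal.ofReal_le_ofReal hreal
    _ = ENNReal.ofReal (Mf ^ 2) * I2 g := ENNReal.ofReal_mul (by positivity)

lemma I2_D_mul_le {f g : AddCircle (2 * π) → ℂ} {Mf Mg : ℝ}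
    (hmf : Measurable f) (hmg : Measurable g)
    (hbf : ∀ x, ‖f x‖ ≤ Mf) (hbg : ∀ x, ‖g x‖ ≤ Mg) (hMf : 0 ≤ Mf) (hMg : 0 ≤ Mg) (t : ℝ) :
    I2 (D (fun x => f x * g x) t) ≤
      ENNReal.ofReal (2 * Mf ^ 2) * I2 (D g t) + ENNReal.ofReal (2 * Mg ^ 2) * I2 (D f t) := by
  have hbfg : ∀ x, ‖f x * g x‖ ≤ Mf * Mg := fun x => by
    rw [norm_mul]
    exact mul_le_mul (hbf x) (hbg x) (norm_nonneg _) hMf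
  have hint1 : Integrable (fun x => ‖D (fun x => f x * g x) t x‖ ^ 2) μH :=
    int_normsq (D_meas (hmf.mul hmg) t) (D_bound hbfg t)
  have hint2 : Integrable
      (fun x => 2 * Mf ^ 2 * ‖D g t x‖ ^ 2 + 2 * Mg ^ 2 * ‖D f t x‖ ^ 2) μH :=
    ((int_normsq (D_meas hmg t) (D_bound hbg t)).const_mul _).add
      ((int_normsq (D_meas hmf t) (D_bound hbf t)).const_mul _)
  have hpt : ∀ x, ‖D (fun x => f x * g x) t x‖ ^ 2 ≤
      2 * Mf ^ 2 * ‖D g t x‖ ^ 2 + 2 * Mg ^ 2 * ‖D f t x‖ ^ 2 := by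
    intro x
    have hid : D (fun x => f x * g x) t x
        = f (x + (t : AddCircle (2 * π))) * D g t x + D f t x * g x := by
      simp only [D]
      ring
    have h1 : ‖D (fun x => f x * g x) t x‖ ≤ Mf * ‖D g t x‖ + ‖D f t x‖ * Mg := by
      rw [hid]
      refine (norm_add_le _ _).trans (add_le_add ?_ ?_)
      · rw [norm_mul]
        exact mul_le_mul_of_nonneg_right (hbf _) (norm_nonneg _)
      · rw [norm_mul]
        exact mul_le_mul_of_nonneg_left (hbg _) (norm_nonneg _)
    have h0 : (0:ℝ) ≤ ‖D (fun x => f x * g x) t x‖ := norm_nonneg _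
    nlinarith [norm_nonneg (D g t x), norm_nonneg (D f t x), sq_nonneg (Mf * ‖D g t x‖ - ‖D f t x‖ * Mg)]
  have hreal : ∫ x, ‖D (fun x => f x * g x) t x‖ ^ 2 ∂μH ≤
      2 * Mf ^ 2 * (∫ x, ‖D g t x‖ ^ 2 ∂μH) + 2 * Mg ^ 2 * (∫ x, ‖D f t x‖ ^ 2 ∂μH) := by
    rw [← integral_const_mul, ← integral_const_mul, ← integral_add
      ((int_normsq (D_meas hmg t) (D_bound hbg t)).const_mul _)
      ((int_normsq (D_meas hmf t) (D_bound hbf t)).const_mul _)]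
    exact integral_mono hint1 hint2 hpt
  calc I2 (D (fun x => f x * g x) t)
      ≤ ENNReal.ofReal (2 * Mf ^ 2 * (∫ x, ‖D g t x‖ ^ 2 ∂μH)
          + 2 * Mg ^ 2 * (∫ x, ‖D f t x‖ ^ 2 ∂μH)) := ENNReal.ofReal_le_ofReal hreal
    _ = ENNReal.ofReal (2 * Mf ^ 2) * I2 (D g t) + ENNReal.ofReal (2 * Mg ^ 2) * I2 (D f t) := by
        rw [ENNReal.ofReal_add (by positivity) (by positivity),
          ENNReal.ofReal_mul (q := ∫ x, ‖D g t x‖ ^ 2 ∂μH) (by positivity),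
          ENNReal.ofReal_mul (q := ∫ x, ‖D f t x‖ ^ 2 ∂μH) (by positivity)]
        rfl

lemma Q_mul_le {f g : AddCircle (2 * π) → ℂ} {Mf Mg : ℝ}
    (hmf : Measurable f) (hmg : Measurable g)
    (hbf : ∀ x, ‖f x‖ ≤ Mf) (hbg : ∀ x, ‖g x‖ ≤ Mg) (hMf : 0 ≤ Mf) (hMg : 0 ≤ Mg) :
    Q (fun x => f x * g x) ≤
      ENNReal.ofReal (2 * Mf ^ 2) * Q g + ENNReal.ofReal (2 * Mg ^ 2) * Q f := by
  have h1 : I2 (fun x => f x * g x) ≤ ENNReal.ofReal (2 * Mf ^ 2) * I2 g := by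
    refine (I2_mul_le hmf hmg hbf hbg hMf hMg).trans ?_
    exact mul_le_mul_left (ENNReal.ofReal_le_ofReal (by nlinarith)) _
  have h2 : ∑' m : ℕ, (2 : ℝ≥0∞) ^ m * I2 (D (fun x => f x * g x) (pm m))
      ≤ ENNReal.ofReal (2 * Mf ^ 2) * ∑' m : ℕ, (2 : ℝ≥0∞) ^ m * I2 (D g (pm m))
        + ENNReal.ofReal (2 * Mg ^ 2) * ∑' m : ℕ, (2 : ℝ≥0∞) ^ m * I2 (D f (pm m)) := by
    calc ∑' m : ℕ, (2 : ℝ≥0∞) ^ m * I2 (D (fun x => f x * g x) (pm m))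
        ≤ ∑' m : ℕ, ((2 : ℝ≥0∞) ^ m * (ENNReal.ofReal (2 * Mf ^ 2) * I2 (D g (pm m)))
            + (2 : ℝ≥0∞) ^ m * (ENNReal.ofReal (2 * Mg ^ 2) * I2 (D f (pm m)))) := by
          refine ENNReal.tsum_le_tsum fun m => ?_
          rw [← mul_add]
          exact mul_le_mul_right (I2_D_mul_le hmf hmg hbf hbg hMf hMg (pm m)) _
      _ = ENNReal.ofReal (2 * Mf ^ 2) * ∑' m : ℕ, (2 : ℝ≥0∞) ^ m * I2 (D g (pm m))
            + ENNReal.ofReal (2 * Mg ^ 2) * ∑' m : ℕ, (2 : ℝ≥0∞) ^ m * I2 (D f (pm m)) := by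
          rw [ENNReal.tsum_add, ← ENNReal.tsum_mul_left, ← ENNReal.tsum_mul_left]
          congr 1
          · exact tsum_congr fun m => by ring
          · exact tsum_congr fun m => by ring
  calc Q (fun x => f x * g x)
      ≤ (ENNReal.ofReal (2 * Mf ^ 2) * I2 g)
        + (ENNReal.ofReal (2 * Mf ^ 2) * ∑' m : ℕ, (2 : ℝ≥0∞) ^ m * I2 (D g (pm m))
          + ENNReal.ofReal (2 * Mg ^ 2) * ∑' m : ℕ, (2 : ℝ≥0∞) ^ m * I2 (D f (pm m))) :=
        add_le_add h1 h2
    _ ≤ ENNReal.ofReal (2 * Mf ^ 2) * Q g + ENNReal.ofReal (2 * Mg ^ 2) * Q f := by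
        rw [Q, Q, mul_add, mul_add, ← add_assoc]
        exact add_le_add_right le_add_self _

lemma sqrt_add_le' (a b : ℝ) (ha : 0 ≤ a) (hb : 0 ≤ b) :
    Real.sqrt (a + b) ≤ Real.sqrt a + Real.sqrt b := by
  have h : a + b ≤ (Real.sqrt a + Real.sqrt b) ^ 2 := by
    have h1 := Real.sq_sqrt ha
    have h2 := Real.sq_sqrt hb
    nlinarith [Real.sqrt_nonneg a, Real.sqrt_nonneg b]
  calc Real.sqrt (a + b) ≤ Real.sqrt ((Real.sqrt a + Real.sqrt b) ^ 2) := Real.sqrt_le_sqrt h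
    _ = Real.sqrt a + Real.sqrt b := Real.sqrt_sq (by positivity)

end Krein

theorem stmt_4 :
    ∃ C > 0, ∀ (f g : AddCircle (2 * π) → ℂ) (Mf Mg : ℝ),
      Measurable f → Measurable g →
      (∀ x, ‖f x‖ ≤ Mf) → (∀ x, ‖g x‖ ≤ Mg) →
      Summable (fun n : ℤ => (1 + |n| : ℝ) * ‖fourierCoeff f n‖ ^ 2) →
      Summable (fun n : ℤ => (1 + |n| : ℝ) * ‖fourierCoeff g n‖ ^ 2) →
      Summable (fun n : ℤ => (1 + |n| : ℝ) * ‖fourierCoeff (fun x => f x * g x) n‖ ^ 2) ∧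
      Real.sqrt (sobolevHalfNormSq (fun x => f x * g x)) ≤
        C * (Mf * Real.sqrt (sobolevHalfNormSq g) + Mg * Real.sqrt (sobolevHalfNormSq f)) := by
  classical
  refine ⟨8, by norm_num, ?_⟩
  intro f g Mf Mg hmf hmg hbf hbg hsf hsg
  have hMf : 0 ≤ Mf := le_trans (norm_nonneg (f 0)) (hbf 0)
  have hMg : 0 ≤ Mg := le_trans (norm_nonneg (g 0)) (hbg 0)
  have hbfg : ∀ x, ‖f x * g x‖ ≤ Mf * Mg := fun x => by
    rw [norm_mul]
    exact mul_le_mul (hbf x) (hbg x) (norm_nonneg _) hMf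
  have hsobg0 : 0 ≤ sobolevHalfNormSq g := tsum_nonneg fun n => by positivity
  have hsobf0 : 0 ≤ sobolevHalfNormSq f := tsum_nonneg fun n => by positivity
  have hSof_f : Krein.Sof f = ENNReal.ofReal (sobolevHalfNormSq f) := by
    rw [sobolevHalfNormSq, ENNReal.ofReal_tsum_of_nonneg (fun n => by positivity) hsf]
    exact tsum_congr fun n => by rw [Int.cast_abs]
  have hSof_g : Krein.Sof g = ENNReal.ofReal (sobolevHalfNormSq g) := by
    rw [sobolevHalfNormSq, ENNReal.ofReal_tsum_of_nonneg (fun n => by positivity) hsg]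
    exact tsum_congr fun n => by rw [Int.cast_abs]
  set R : ℝ := 56 * Mf ^ 2 * sobolevHalfNormSq g + 56 * Mg ^ 2 * sobolevHalfNormSq f with hR
  have hR0 : 0 ≤ R := by positivity
  have key : Krein.Sof (fun x => f x * g x) ≤ ENNReal.ofReal R := by
    calc Krein.Sof (fun x => f x * g x) ≤ Krein.Q (fun x => f x * g x) :=
          Krein.Sof_le_Q (hmf.mul hmg) hbfg
      _ ≤ ENNReal.ofReal (2 * Mf ^ 2) * Krein.Q g + ENNReal.ofReal (2 * Mg ^ 2) * Krein.Q f :=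
          Krein.Q_mul_le hmf hmg hbf hbg hMf hMg
      _ ≤ ENNReal.ofReal (2 * Mf ^ 2) * (28 * Krein.Sof g)
            + ENNReal.ofReal (2 * Mg ^ 2) * (28 * Krein.Sof f) := by
          gcongr
          · exact Krein.Q_le_Sof hmg hbg
          · exact Krein.Q_le_Sof hmf hbf
      _ = ENNReal.ofReal R := by
          rw [hSof_f, hSof_g, hR]
          rw [show ((28 : ℝ≥0∞)) = ENNReal.ofReal (28 : ℝ) by rw [ENNReal.ofReal_ofNat]]
          rw [← ENNReal.ofReal_mul (by norm_num), ← ENNReal.ofReal_mul (by positivity),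
            ← ENNReal.ofReal_mul (by norm_num), ← ENNReal.ofReal_mul (by positivity),
            ← ENNReal.ofReal_add (by positivity) (by positivity)]
          congr 1
          ring
  have hne : Krein.Sof (fun x => f x * g x) ≠ ⊤ :=
    (lt_of_le_of_lt key ENNReal.ofReal_lt_top).ne
  have hsum : Summable (fun n : ℤ =>
      (1 + |n| : ℝ) * ‖fourierCoeff (fun x => f x * g x) n‖ ^ 2) := by
    have h1 := ENNReal.summable_toReal hne
    refine h1.congr fun n => ?_
    rw [ENNReal.toReal_ofReal (by positivity), Int.cast_abs]
  refine ⟨hsum, ?_⟩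
  have hSof_fg : Krein.Sof (fun x => f x * g x)
      = ENNReal.ofReal (sobolevHalfNormSq (fun x => f x * g x)) := by
    rw [sobolevHalfNormSq, ENNReal.ofReal_tsum_of_nonneg (fun n => by positivity) hsum]
    exact tsum_congr fun n => by rw [Int.cast_abs]
  have hsob_le : sobolevHalfNormSq (fun x => f x * g x) ≤ R := by
    have h1 : (Krein.Sof (fun x => f x * g x)).toReal ≤ (ENNReal.ofReal R).toReal :=
      ENNReal.toReal_mono ENNReal.ofReal_ne_top key
    rw [hSof_fg] at h1
    have hs0 : 0 ≤ sobolevHalfNormSq (fun x => f x * g x) :=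
      tsum_nonneg fun n => by positivity
    rwa [ENNReal.toReal_ofReal hs0, ENNReal.toReal_ofReal hR0] at h1
  have h56 : Real.sqrt 56 ≤ 8 := by
    have : Real.sqrt 56 ≤ Real.sqrt 64 := Real.sqrt_le_sqrt (by norm_num)
    rwa [show (64 : ℝ) = 8 ^ 2 by norm_num, Real.sqrt_sq (by norm_num)] at this
  have h3 : Real.sqrt (56 * Mf ^ 2 * sobolevHalfNormSq g)
      = Real.sqrt 56 * Mf * Real.sqrt (sobolevHalfNormSq g) := by
    rw [Real.sqrt_mul (by positivity), Real.sqrt_mul (by norm_num), Real.sqrt_sq hMf]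
  have h4 : Real.sqrt (56 * Mg ^ 2 * sobolevHalfNormSq f)
      = Real.sqrt 56 * Mg * Real.sqrt (sobolevHalfNormSq f) := by
    rw [Real.sqrt_mul (by positivity), Real.sqrt_mul (by norm_num), Real.sqrt_sq hMg]
  calc Real.sqrt (sobolevHalfNormSq (fun x => f x * g x)) ≤ Real.sqrt R :=
        Real.sqrt_le_sqrt hsob_le
    _ ≤ Real.sqrt (56 * Mf ^ 2 * sobolevHalfNormSq g)
        + Real.sqrt (56 * Mg ^ 2 * sobolevHalfNormSq f) :=
        Krein.sqrt_add_le' _ _ (by positivity) (by positivity)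
    _ = Real.sqrt 56 * Mf * Real.sqrt (sobolevHalfNormSq g)
        + Real.sqrt 56 * Mg * Real.sqrt (sobolevHalfNormSq f) := by rw [h3, h4]
    _ ≤ 8 * (Mf * Real.sqrt (sobolevHalfNormSq g) + Mg * Real.sqrt (sobolevHalfNormSq f)) := by
        have hx : 0 ≤ Mf * Real.sqrt (sobolevHalfNormSq g) := by positivity
        have hy : 0 ≤ Mg * Real.sqrt (sobolevHalfNormSq f) := by positivity
        nlinarith [Real.sqrt_nonneg (56 : ℝ)]
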